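/- Let A ∈ ℂ^{n×n} with n ≥ 1 be a matrix all of whose eigenvalues have magnitude at most 1, let C ∈ ℂ^{m×n}, and let s ≥ 1 be an integer. Then there exists a nonzero vector v ∈ ℂ^n with ‖O_s v‖ ≤ √s · ‖C‖ · ‖v‖, where O_s is the order-s observability matrix; in particular the smallest singular value of O_s is at most √s‖C‖. -/

import Mathlib

open scoped Matrix.Norms.L2Operator

/-- Euclidean norm of a complex vector. -/
noncomputable def enormC {ι : Type*} [Fintype ι] (v : ι → ℂ) : ℝ :=
  Real.sqrt (∑ i, ‖v i‖ ^ 2)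

/-- `enormC` agrees with the `EuclideanSpace` norm. -/
lemma enormC_eq_norm {ι : Type*} [Fintype ι] (v : ι → ℂ) :
    enormC v = ‖(EuclideanSpace.equiv ι ℂ).symm v‖ := by
  rw [EuclideanSpace.norm_eq, enormC]
  rfl

/-- The order-`s` observability matrix `O_s = [C; CA; CA²; …; CA^{s−1}]` (row blocks indexed by
`Fin s`). -/
noncomputable def obsMatC (n m s : ℕ) (A : Matrix (Fin n) (Fin n) ℂ) (C : Matrix (Fin m) (Fin n) ℂ) :
    Matrix (Fin s × Fin m) (Fin n) ℂ :=
  fun ir j => (C * A ^ (ir.1 : ℕ)) ir.2 j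

/-- If all eigenvalues of `A ∈ ℂ^{n×n}` (with `n ≥ 1`) have magnitude at most
`1`, then for every `s ≥ 1` there is a nonzero vector `v` with `‖O_s v‖ ≤ √s ‖C‖ ‖v‖`; in
particular the smallest singular value of the observability matrix `O_s` is at most `√s ‖C‖`. -/
theorem observability_min_singular_value_bound (n m s : ℕ) (hn : 1 ≤ n) (hs : 1 ≤ s)
    (A : Matrix (Fin n) (Fin n) ℂ) (C : Matrix (Fin m) (Fin n) ℂ)
    (hA : ∀ μ ∈ A.charpoly.roots, ‖μ‖ ≤ 1) :
    ∃ v : Fin n → ℂ, v ≠ 0 ∧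
      enormC ((obsMatC n m s A C).mulVec v) ≤ Real.sqrt s * ‖C‖ * enormC v := by
  classical
  -- get an eigenvalue
  have hdeg : 0 < A.charpoly.degree := by
    rw [A.charpoly_degree_eq_dim]
    simpa [Fintype.card_fin] using Nat.lt_of_succ_le hn
  obtain ⟨μ, hμroot⟩ := Complex.exists_root hdeg
  have hμ1 : ‖μ‖ ≤ 1 := by
    refine hA μ ?_
    rw [Polynomial.mem_roots (A.charpoly_monic.ne_zero)]
    exact hμroot
  -- get an eigenvector
  have hdet : (μ • (1 : Matrix (Fin n) (Fin n) ℂ) - A).det = 0 := by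
    have := eval_det (Matrix.charmatrix A) μ
    rw [← Matrix.charpoly, hμroot.eq_zero] at this
    rw [Matrix.matPolyEquiv_charmatrix] at this
    simp only [Polynomial.eval_sub, Polynomial.eval_X, Polynomial.eval_C] at this
    have h2 : Matrix.scalar (Fin n) μ - A = μ • 1 - A := by
      congr 1
      ext i j
      simp [Matrix.scalar_apply, Matrix.smul_apply, Matrix.one_apply, Matrix.diagonal_apply]
    rw [h2] at this
    exact this.symm
  obtain ⟨v, hv0, hvker⟩ := (Matrix.exists_mulVec_eq_zero_iff).2 hdet
  have hev : A.mulVec v = μ • v := by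
    have := hvker
    rw [Matrix.sub_mulVec, sub_eq_zero] at this
    rw [← this, Matrix.smul_mulVec, Matrix.one_mulVec]
  -- powers
  have hpow : ∀ k : ℕ, (A ^ k).mulVec v = μ ^ k • v := by
    intro k
    induction k with
    | zero => simp [Matrix.one_mulVec]
    | succ k ih =>
      rw [pow_succ', ← Matrix.mulVec_mulVec, ih, Matrix.mulVec_smul, hev,
        smul_smul, pow_succ', mul_comm]
  refine ⟨v, hv0, ?_⟩
  -- compute the mulVec entries
  have hentry : ∀ k : Fin s, ∀ i : Fin m,
      (obsMatC n m s A C).mulVec v (k, i) = μ ^ (k : ℕ) * (C.mulVec v i) := by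
    intro k i
    have : (obsMatC n m s A C).mulVec v (k, i) = ((C * A ^ (k : ℕ)).mulVec v) i := rfl
    rw [this, ← Matrix.mulVec_mulVec, hpow, Matrix.mulVec_smul]
    simp [Pi.smul_apply, smul_eq_mul]
  -- bound the norm
  have hCv : enormC (C.mulVec v) ≤ ‖C‖ * enormC v := by
    rw [enormC_eq_norm, enormC_eq_norm]
    exact C.l2_opNorm_mulVec ((EuclideanSpace.equiv (Fin n) ℂ).symm v)
  have hsq : ∑ p : Fin s × Fin m, ‖(obsMatC n m s A C).mulVec v p‖ ^ 2
      ≤ s * ∑ i, ‖C.mulVec v i‖ ^ 2 := by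
    rw [Fintype.sum_prod_type]
    calc ∑ k : Fin s, ∑ i : Fin m, ‖(obsMatC n m s A C).mulVec v (k, i)‖ ^ 2
        ≤ ∑ k : Fin s, ∑ i : Fin m, ‖C.mulVec v i‖ ^ 2 := by
          refine Finset.sum_le_sum fun k _ => Finset.sum_le_sum fun i _ => ?_
          rw [hentry k i, norm_mul, mul_pow]
          have h1 : ‖μ ^ (k : ℕ)‖ ≤ 1 := by
            rw [norm_pow]
            exact pow_le_one₀ (norm_nonneg _) hμ1
          have h2 : ‖μ ^ (k : ℕ)‖ ^ 2 ≤ 1 := pow_le_one₀ (norm_nonneg _) h1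
          nlinarith [sq_nonneg ‖C.mulVec v i‖, norm_nonneg (C.mulVec v i)]
      _ = s * ∑ i, ‖C.mulVec v i‖ ^ 2 := by
          rw [Finset.sum_const, Finset.card_univ, Fintype.card_fin, nsmul_eq_mul]
  calc enormC ((obsMatC n m s A C).mulVec v)
      ≤ Real.sqrt (s * ∑ i, ‖C.mulVec v i‖ ^ 2) := Real.sqrt_le_sqrt hsq
    _ = Real.sqrt s * enormC (C.mulVec v) := by
        rw [Real.sqrt_mul (Nat.cast_nonneg s)]; rfl
    _ ≤ Real.sqrt s * (‖C‖ * enormC v) := by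
        exact mul_le_mul_of_nonneg_left hCv (Real.sqrt_nonneg _)
    _ = Real.sqrt s * ‖C‖ * enormC v := by ring
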